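/- Gated model coincides with retraining in exponential (linear) families: let Π be a convex set of probability distributions on a finite set X such that for every distribution p the reverse-information projection π*(p) = argmin_{π ∈ Π} D_KL(p ‖ π) exists, is unique, and satisfies the Pythagorean equality D_KL(p ‖ π) = D_KL(p ‖ π*(p)) + D_KL(π*(p) ‖ π) for all π ∈ Π. Then for any sources p_1,...,p_n and λ ∈ Δ^n, the projection of the mixture equals the mixture of the projections: π*(∑_k λ_k p_k) = ∑_k λ_k π*(p_k). -/
import Mathlib


open Finset

/-- Kullback-Leibler divergence on a finite type, with convention 0·log 0 = 0. -/
noncomputable def KL {X : Type*} [Fintype X] (p q : X → ℝ) : ℝ :=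
  ∑ x, p x * Real.log (p x / q x)

/-- `p` is a probability mass function on a finite type. -/
def IsPMF {X : Type*} [Fintype X] (p : X → ℝ) : Prop :=
  (∀ x, 0 ≤ p x) ∧ ∑ x, p x = 1

lemma KL_eq_sub {X : Type*} [Fintype X] (p π : X → ℝ) (hp : ∀ x, 0 ≤ p x)
    (hπ : ∀ x, 0 < π x) :
    KL p π = (∑ x, p x * Real.log (p x)) - ∑ x, p x * Real.log (π x) := by
  rw [KL, ← Finset.sum_sub_distrib]
  refine Finset.sum_congr rfl fun x _ => ?_
  rcases eq_or_lt_of_le (hp x) with h | h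
  · simp [← h]
  · rw [Real.log_div h.ne' (hπ x).ne', mul_sub]

lemma KL_self {X : Type*} [Fintype X] (q : X → ℝ) (hq : ∀ x, 0 < q x) :
    KL q q = 0 := by
  unfold KL
  refine Finset.sum_eq_zero fun x _ => ?_
  rw [div_self (hq x).ne', Real.log_one, mul_zero]

lemma KL_nonneg {X : Type*} [Fintype X] (p q : X → ℝ) (hp : IsPMF p)
    (hq : IsPMF q) (hqpos : ∀ x, 0 < q x) : 0 ≤ KL p q := by
  have h : ∀ x : X, p x - q x ≤ p x * Real.log (p x / q x) := by
    intro x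
    rcases eq_or_lt_of_le (hp.1 x) with h | h
    · simp [← h]; linarith [(hqpos x).le]
    · have hlog := Real.log_le_sub_one_of_pos (div_pos (hqpos x) h)
      rw [Real.log_div (hqpos x).ne' h.ne'] at hlog
      have : Real.log (p x / q x) = Real.log (p x) - Real.log (q x) :=
        Real.log_div h.ne' (hqpos x).ne'
      rw [this]
      have hx : q x / p x - 1 = (q x - p x) / p x := by field_simp
      rw [hx] at hlog
      have hmul := (le_div_iff₀ h).mp hlog
      nlinarith
  calc (0:ℝ) = ∑ x, (p x - q x) := by
        rw [Finset.sum_sub_distrib, hp.2, hq.2]; ring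
    _ ≤ _ := Finset.sum_le_sum fun x _ => h x

lemma KL_mix_sub {X : Type*} [Fintype X] {n : ℕ} (l : Fin n → ℝ)
    (hl : ∀ k, 0 ≤ l k) (f : Fin n → X → ℝ) (hf : ∀ k x, 0 ≤ f k x)
    (π : X → ℝ) (hπ : ∀ x, 0 < π x) :
    KL (fun x => ∑ k, l k * f k x) π - ∑ k, l k * KL (f k) π
      = (∑ x, (∑ k, l k * f k x) * Real.log (∑ k, l k * f k x))
        - ∑ k, l k * ∑ x, f k x * Real.log (f k x) := by
  have hmnn : ∀ x, 0 ≤ ∑ k, l k * f k x :=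
    fun x => Finset.sum_nonneg fun k _ => mul_nonneg (hl k) (hf k x)
  rw [KL_eq_sub _ π hmnn hπ]
  have h2 : ∑ k, l k * KL (f k) π
      = ∑ k, l k * (∑ x, f k x * Real.log (f k x))
        - ∑ k, l k * ∑ x, f k x * Real.log (π x) := by
    rw [← Finset.sum_sub_distrib]
    exact Finset.sum_congr rfl fun k _ => by rw [KL_eq_sub _ π (hf k) hπ, mul_sub]
  have h3 : ∑ x, (∑ k, l k * f k x) * Real.log (π x)
      = ∑ k, l k * ∑ x, f k x * Real.log (π x) := by
    simp_rw [Finset.sum_mul, Finset.mul_sum, mul_assoc]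
    exact Finset.sum_comm
  rw [h2, h3]; ring

/-- Gated model coincides with retraining in linear (exponential) families:
if the reverse information projection onto a convex family `Π` exists, is unique, and
satisfies the Pythagorean identity, then the projection of a mixture equals the mixture
of the projections. -/
theorem projection_of_mixture_eq_mixture_of_projections
    {X : Type*} [Fintype X] {n : ℕ}
    (Fam : Set (X → ℝ)) (hFamConvex : Convex ℝ Fam)
    (hFam : ∀ π ∈ Fam, IsPMF π ∧ ∀ x, 0 < π x)
    (proj : (X → ℝ) → (X → ℝ))
    (hprojMem : ∀ p : X → ℝ, IsPMF p → proj p ∈ Fam)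
    (hprojMin : ∀ p : X → ℝ, IsPMF p → ∀ π ∈ Fam, KL p (proj p) ≤ KL p π)
    (hprojUnique : ∀ p : X → ℝ, IsPMF p → ∀ π ∈ Fam,
      KL p π = KL p (proj p) → π = proj p)
    (hPyth : ∀ p : X → ℝ, IsPMF p → ∀ π ∈ Fam,
      KL p π = KL p (proj p) + KL (proj p) π)
    (p : Fin n → X → ℝ) (hp : ∀ k, IsPMF (p k))
    (l : Fin n → ℝ) (hl : ∀ k, 0 ≤ l k) (hl1 : ∑ k, l k = 1) :
    proj (fun x => ∑ k, l k * p k x) = fun x => ∑ k, l k * proj (p k) x := by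
  set m : X → ℝ := fun x => ∑ k, l k * p k x with hm_def
  set q : X → ℝ := fun x => ∑ k, l k * proj (p k) x with hq_def
  -- m is a PMF
  have hmPMF : IsPMF m := by
    constructor
    · intro x
      exact Finset.sum_nonneg fun k _ => mul_nonneg (hl k) ((hp k).1 x)
    · rw [hm_def]
      simp only
      rw [Finset.sum_comm]
      calc ∑ k, ∑ x, l k * p k x = ∑ k, l k * ∑ x, p k x := by
            simp_rw [Finset.mul_sum]
        _ = ∑ k, l k := by
            refine Finset.sum_congr rfl fun k _ => by rw [(hp k).2, mul_one]
        _ = 1 := hl1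
  -- q is in the family
  have hprojFam : ∀ k, proj (p k) ∈ Fam := fun k => hprojMem (p k) (hp k)
  have hqFam : q ∈ Fam := by
    have := hFamConvex.sum_mem (t := Finset.univ) (fun k _ => hl k) hl1
      (fun k _ => hprojFam k)
    have heq : q = ∑ k, l k • proj (p k) := by
      funext x
      rw [hq_def]
      simp [Finset.sum_apply]
    rwa [heq]
  have hqPMF : IsPMF q := (hFam q hqFam).1
  have hqpos : ∀ x, 0 < q x := (hFam q hqFam).2
  have hprojmFam : proj m ∈ Fam := hprojMem m hmPMF
  -- key: KL m π - KL q π is constant over π ∈ Fam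
  have key : ∀ π ∈ Fam, KL m π - KL q π
      = (∑ k, l k * KL (p k) (proj (p k)))
        + ((∑ x, m x * Real.log (m x)) - ∑ k, l k * ∑ x, p k x * Real.log (p k x))
        - ((∑ x, q x * Real.log (q x))
            - ∑ k, l k * ∑ x, proj (p k) x * Real.log (proj (p k) x)) := by
    intro π hmem
    have hπpos : ∀ x, 0 < π x := (hFam π hmem).2
    have a1 := KL_mix_sub l hl p (fun k x => (hp k).1 x) π hπpos
    have a2 := KL_mix_sub l hl (fun k => proj (p k))
      (fun k x => ((hFam _ (hprojFam k)).2 x).le) π hπpos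
    rw [← hm_def] at a1
    rw [← hq_def] at a2
    have a3 : ∑ k, l k * KL (p k) π
        = ∑ k, l k * KL (p k) (proj (p k)) + ∑ k, l k * KL (proj (p k)) π := by
      rw [← Finset.sum_add_distrib]
      exact Finset.sum_congr rfl fun k _ => by
        rw [hPyth (p k) (hp k) π hmem, mul_add]
    rw [hm_def, hq_def]
    simp only
    rw [← hm_def, ← hq_def]
    linarith
  have e := key (proj m) hprojmFam
  have e' := key q hqFam
  have h0 : KL q q = 0 := KL_self q hqpos
  have hge : 0 ≤ KL q (proj m) :=
    KL_nonneg q (proj m) hqPMF (hFam _ hprojmFam).1 (hFam _ hprojmFam).2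
  have hle : KL m (proj m) ≤ KL m q := hprojMin m hmPMF q hqFam
  have : KL m q = KL m (proj m) := by linarith
  exact (hprojUnique m hmPMF q hqFam this).symm
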